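/- arXiv:0901.1451 — 2 statements merged into one kernel-verified Lean document; each statement's English description precedes it below -/
import Mathlib

section
/- Let G' be the marked graph obtained from a marked graph G by adjoining one isolated, unmarked vertex with no incident edges; the new vertex may be either looped or unlooped. Then V_{G'} = V_G; that is, the marked-graph Jones polynomial is invariant under the Ω.1 move of adjoining or deleting an isolated unmarked vertex. -/
open MvPolynomial

/-- A marked graph: a finite vertex set, an adjacency matrix over GF(2)
(the diagonal entry at `v` is 1 iff `v` carries a loop; for `v ≠ w` the `(v,w)` entry
is 1 iff `v` and `w` are adjacent), a designated set of marked vertices, and a number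
of free loops. -/
structure MarkedGraph (V : Type) [Fintype V] [DecidableEq V] where
  adj : Matrix V V (ZMod 2)
  marked : V → Bool
  freeLoops : ℕ

namespace MarkedGraph

variable {V : Type} [Fintype V] [DecidableEq V]

/-- GF(2)-nullity of a square matrix: the dimension of its kernel. -/
noncomputable def nullity {ι : Type*} [Fintype ι] (M : Matrix ι ι (ZMod 2)) : ℕ :=
  Module.finrank (ZMod 2) (LinearMap.ker M.mulVecLin)

/-- The diagonal matrix `Δ_T` over GF(2) whose diagonal entry at `v` is 1 iff `v ∈ T`. -/
def delta (T : Finset V) : Matrix V V (ZMod 2) :=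
  Matrix.diagonal fun v => if v ∈ T then 1 else 0

/-- The vertices kept in the submatrix `𝒜(G)_T`: delete each marked vertex whose
diagonal entry in `𝒜(G) + Δ_T` is 0. -/
def keep (G : MarkedGraph V) (T : Finset V) : Finset V :=
  Finset.univ.filter fun v => ¬ (G.marked v = true ∧ (G.adj + delta T) v v = 0)

/-- The submatrix `𝒜(G)_T` of `𝒜(G) + Δ_T`. -/
def subMat (G : MarkedGraph V) (T : Finset V) :
    Matrix (G.keep T) (G.keep T) (ZMod 2) :=
  fun i j => (G.adj + delta T) i.1 j.1

/-- The marked-graph bracket polynomial `[G] ∈ ℤ[A,B,d]`, where `A = X 0`, `B = X 1`,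
`d = X 2`:  `[G] = d^φ ⬝ Σ_{T ⊆ V(G)} A^(n-|T|) B^(|T|) d^(ν(𝒜(G)_T))`. -/
noncomputable def bracket (G : MarkedGraph V) : MvPolynomial (Fin 3) ℤ :=
  X 2 ^ G.freeLoops *
    ∑ T : Finset V,
      X 0 ^ (Fintype.card V - T.card) * X 1 ^ T.card * X 2 ^ nullity (G.subMat T)

/-- `x` is a neighbor of `v` (no vertex is a neighbor of itself). -/
def nbr (G : MarkedGraph V) (v x : V) : Prop := x ≠ v ∧ G.adj v x = 1

instance (G : MarkedGraph V) (v x : V) : Decidable (G.nbr v x) :=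
  inferInstanceAs (Decidable (x ≠ v ∧ G.adj v x = 1))

/-- Delete the vertices in `s`, together with all incident edges
(marks and free loops unchanged). -/
def delete (G : MarkedGraph V) (s : Finset V) : MarkedGraph {v : V // v ∉ s} where
  adj := fun i j => G.adj i.1 j.1
  marked := fun i => G.marked i.1
  freeLoops := G.freeLoops

/-- The local complement `G^v`: toggle every entry of the adjacency matrix (diagonal
entries included) whose row and column indices are both neighbors of `v`. -/
def localComp (G : MarkedGraph V) (v : V) : MarkedGraph V :=
  { G with adj := fun x y => if G.nbr v x ∧ G.nbr v y then G.adj x y + 1 else G.adj x y }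

/-- `G - {v,v}`: remove the loop at `v` (set the diagonal entry at `v` to 0). -/
def removeLoop (G : MarkedGraph V) (v : V) : MarkedGraph V :=
  { G with adj := fun x y => if x = v ∧ y = v then 0 else G.adj x y }

/-- `G + I`: toggle all loops. -/
def addI (G : MarkedGraph V) : MarkedGraph V :=
  { G with adj := G.adj + 1 }

/-- `G⁺`: adjoin one free loop. -/
def addFreeLoop (G : MarkedGraph V) : MarkedGraph V :=
  { G with freeLoops := G.freeLoops + 1 }

/-- The condition under which the pivot `G^{vw}` toggles the adjacency between `x`
and `y`: `x` is a neighbor of `v`, `y` is a neighbor of `w`, and either `x` is not a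
neighbor of `w` or `y` is not a neighbor of `v`. -/
def pivotCond (G : MarkedGraph V) (v w x y : V) : Prop :=
  G.nbr v x ∧ G.nbr w y ∧ (¬ G.nbr w x ∨ ¬ G.nbr v y)

instance (G : MarkedGraph V) (v w x y : V) : Decidable (G.pivotCond v w x y) :=
  inferInstanceAs (Decidable (G.nbr v x ∧ G.nbr w y ∧ (¬ G.nbr w x ∨ ¬ G.nbr v y)))

/-- The pivot `G^{vw}`: toggle the adjacency between every pair of distinct vertices
`x, y ∉ {v,w}` such that `x` is a neighbor of `v`, `y` is a neighbor of `w`, and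
either `x` is not a neighbor of `w` or `y` is not a neighbor of `v`
(loops are unaffected). -/
def pivot (G : MarkedGraph V) (v w : V) : MarkedGraph V :=
  { G with adj := fun x y =>
      if x ≠ v ∧ x ≠ w ∧ y ≠ v ∧ y ≠ w ∧ x ≠ y ∧
          (G.pivotCond v w x y ∨ G.pivotCond v w y x)
      then G.adj x y + 1 else G.adj x y }

/-- Interchange the neighbors of `v` and `w` in an adjacency matrix, keeping loops
and the edge between `v` and `w` unchanged. -/
def swapAdjacencies (M : Matrix V V (ZMod 2)) (v w : V) : Matrix V V (ZMod 2) :=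
  fun x y =>
    if x = y then M x y
    else if (x = v ∧ y = w) ∨ (x = w ∧ y = v) then M x y
    else M (Equiv.swap v w x) (Equiv.swap v w y)

/-- The marked pivot `G_c^{vw}`: the pivot `G^{vw}` with the marks on `v` and `w`
toggled and the neighbors of `v` and `w` interchanged (loops, the edge between `v`
and `w`, and free loops unchanged). -/
def markedPivot (G : MarkedGraph V) (v w : V) : MarkedGraph V where
  adj := swapAdjacencies (G.pivot v w).adj v w
  marked := fun u => if u = v ∨ u = w then !(G.marked u) else G.marked u
  freeLoops := G.freeLoops

/-- The disjoint union of two marked graphs: block-diagonal adjacency matrix,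
each vertex marked as it was, free loops added. -/
def disjUnion {V₁ V₂ : Type} [Fintype V₁] [DecidableEq V₁] [Fintype V₂] [DecidableEq V₂]
    (G₁ : MarkedGraph V₁) (G₂ : MarkedGraph V₂) : MarkedGraph (V₁ ⊕ V₂) where
  adj := Matrix.fromBlocks G₁.adj 0 0 G₂.adj
  marked := Sum.elim G₁.marked G₂.marked
  freeLoops := G₁.freeLoops + G₂.freeLoops

/-- Remove the three edges `{u,v}`, `{u,w}`, `{v,w}` (all else unchanged). -/
def removeEdges3 (G : MarkedGraph V) (u v w : V) : MarkedGraph V :=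
  { G with adj := fun x y =>
      if (x = u ∧ y = v) ∨ (x = v ∧ y = u) ∨ (x = u ∧ y = w) ∨ (x = w ∧ y = u) ∨
          (x = v ∧ y = w) ∨ (x = w ∧ y = v)
      then 0 else G.adj x y }

/-- Adjoin one isolated, unmarked vertex with no incident edges; it is looped iff
`loop = true`. -/
def addIsolated (G : MarkedGraph V) (loop : Bool) : MarkedGraph (Option V) where
  adj := fun x y =>
    match x, y with
    | some a, some b => G.adj a b
    | none, none => if loop then 1 else 0
    | _, _ => 0
  marked := fun x => match x with | some a => G.marked a | none => false
  freeLoops := G.freeLoops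

/-- The number of vertices of `s` that are adjacent to `x`. -/
def countAdj (G : MarkedGraph V) (x : V) (s : Finset V) : ℕ :=
  (s.filter fun y => G.adj x y = 1).card

/-- The reduced marked-graph bracket `⟨G⟩ ∈ ℤ[A, A⁻¹]`: substitute `B ↦ A⁻¹` and
`d ↦ -A² - A⁻²` in `[G]`. -/
noncomputable def reducedBracket (G : MarkedGraph V) : LaurentPolynomial ℤ :=
  MvPolynomial.aeval
    ![LaurentPolynomial.T 1, LaurentPolynomial.T (-1),
      -LaurentPolynomial.T 2 - LaurentPolynomial.T (-2)] G.bracket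

/-- The number of looped vertices of `G`. -/
def numLoops (G : MarkedGraph V) : ℕ :=
  (Finset.univ.filter fun v => G.adj v v = 1).card

/-- The Jones polynomial `V_G = (-1)^n ⬝ q^(3n-6ℓ) ⬝ ⟨G⟩(q⁻¹)`, as a Laurent
polynomial in the formal variable `q` (representing `t^(1/4)`); substituting
`A ↦ q⁻¹` in `⟨G⟩` amounts to substituting `A ↦ q⁻¹`, `B ↦ q`, `d ↦ -q² - q⁻²`
in `[G]`. -/
noncomputable def jones (G : MarkedGraph V) : LaurentPolynomial ℤ :=
  (-1) ^ Fintype.card V *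
    LaurentPolynomial.T (3 * (Fintype.card V : ℤ) - 6 * (G.numLoops : ℤ)) *
    MvPolynomial.aeval
      ![LaurentPolynomial.T (-1), LaurentPolynomial.T 1,
        -LaurentPolynomial.T 2 - LaurentPolynomial.T (-2)] G.bracket

end MarkedGraph
namespace MarkedGraph

open Matrix

section NullityLemmas

lemma nullity_submatrix {ι κ : Type*} [Fintype ι] [Fintype κ] [DecidableEq ι] [DecidableEq κ]
    (e : ι ≃ κ) (M : Matrix κ κ (ZMod 2)) : nullity (M.submatrix e e) = nullity M := by
  unfold nullity
  rw [Matrix.mulVecLin_submatrix e e M, ← LinearMap.comp_assoc, LinearMap.ker_comp,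
    LinearMap.ker_comp_of_ker_eq_bot M.mulVecLin (LinearMap.ker_eq_bot_of_injective
      (LinearMap.funLeft_injective_of_surjective (ZMod 2) (ZMod 2) e e.surjective))]
  have : LinearMap.funLeft (ZMod 2) (ZMod 2) e.symm
      = (LinearEquiv.funCongrLeft (ZMod 2) (ZMod 2) e.symm :
          (ι → ZMod 2) →ₗ[ZMod 2] (κ → ZMod 2)) := rfl
  rw [this, Submodule.comap_equiv_eq_map_symm, LinearEquiv.finrank_map_eq]

lemma nullity_fromBlocks {ι κ : Type*} [Fintype ι] [Fintype κ] [DecidableEq ι] [DecidableEq κ]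
    (A : Matrix ι ι (ZMod 2)) (D : Matrix κ κ (ZMod 2)) :
    nullity (fromBlocks A 0 0 D) = nullity A + nullity D := by
  have key : ∀ x : ι ⊕ κ → ZMod 2, x ∈ LinearMap.ker (fromBlocks A 0 0 D).mulVecLin ↔
      (x ∘ Sum.inl) ∈ LinearMap.ker A.mulVecLin ∧ (x ∘ Sum.inr) ∈ LinearMap.ker D.mulVecLin := by
    intro x
    simp only [LinearMap.mem_ker, Matrix.mulVecLin_apply, fromBlocks_mulVec,
      Matrix.zero_mulVec, add_zero, zero_add]
    constructor
    · intro h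
      exact ⟨funext fun i => congrFun h (Sum.inl i), funext fun i => congrFun h (Sum.inr i)⟩
    · rintro ⟨h1, h2⟩
      ext i
      cases i with
      | inl i => exact congrFun h1 i
      | inr i => exact congrFun h2 i
  let E : LinearMap.ker (fromBlocks A 0 0 D).mulVecLin ≃ₗ[ZMod 2]
      (LinearMap.ker A.mulVecLin × LinearMap.ker D.mulVecLin) :=
    { toFun := fun x => (⟨x.1 ∘ Sum.inl, ((key x.1).mp x.2).1⟩,
        ⟨x.1 ∘ Sum.inr, ((key x.1).mp x.2).2⟩)
      invFun := fun p => ⟨Sum.elim p.1.1 p.2.1,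
        (key _).mpr ⟨by simp, by simp⟩⟩
      map_add' := fun x y => rfl
      map_smul' := fun c x => rfl
      left_inv := fun x => by
        ext i
        cases i <;> rfl
      right_inv := fun p => by
        ext i <;> rfl }
  rw [nullity, LinearEquiv.finrank_eq E, Module.finrank_prod]
  rfl

lemma nullity_punit (c : ZMod 2) :
    nullity (Matrix.of (fun _ _ : PUnit.{1} => c)) = if c = 0 then 1 else 0 := by
  rcases eq_or_ne c 0 with h | h
  · subst h
    have : (Matrix.of (fun _ _ : PUnit.{1} => (0 : ZMod 2))) = 0 := by ext i j; rfl
    rw [nullity, this, Matrix.mulVecLin_zero, LinearMap.ker_zero, finrank_top,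
      Module.finrank_fintype_fun_eq_card, Fintype.card_punit]
    simp
  · have hc : c = 1 := by fin_cases c <;> first | rfl | exact absurd rfl h
    subst hc
    have : (Matrix.of (fun _ _ : PUnit.{1} => (1 : ZMod 2))) = 1 := by
      ext i j
      simp [Matrix.one_apply, Subsingleton.elim i j]
    rw [nullity, this, Matrix.mulVecLin_one, LinearMap.ker_id]
    simp

lemma nullity_option {ι : Type*} [Fintype ι] [DecidableEq ι]
    (M : Matrix (Option ι) (Option ι) (ZMod 2)) (N : Matrix ι ι (ZMod 2)) (c : ZMod 2)
    (hss : ∀ a b, M (some a) (some b) = N a b) (hns : ∀ a, M none (some a) = 0)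
    (hsn : ∀ a, M (some a) none = 0) (hnn : M none none = c) :
    nullity M = nullity N + if c = 0 then 1 else 0 := by
  have hM : M.submatrix (Equiv.optionEquivSumPUnit ι).symm (Equiv.optionEquivSumPUnit ι).symm
      = fromBlocks N 0 0 (Matrix.of (fun _ _ : PUnit.{1} => c)) := by
    ext i j
    cases i <;> cases j <;>
      simp [Matrix.submatrix_apply, hss, hns, hsn, hnn, fromBlocks]
  rw [← nullity_submatrix (Equiv.optionEquivSumPUnit ι).symm M, hM, nullity_fromBlocks,
    nullity_punit]

end NullityLemmas

section Omega1

variable {V : Type} [Fintype V] [DecidableEq V]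

def liftT (S : Finset V) (b : Bool) : Finset (Option V) :=
  cond b (insert none (S.map Function.Embedding.some)) (S.map Function.Embedding.some)

@[simp] lemma mem_liftT_some (S : Finset V) (b : Bool) (a : V) :
    some a ∈ liftT S b ↔ a ∈ S := by cases b <;> simp [liftT]

@[simp] lemma mem_liftT_none (S : Finset V) (b : Bool) :
    (none ∈ liftT S b) ↔ b = true := by cases b <;> simp [liftT]

lemma card_liftT (S : Finset V) (b : Bool) :
    (liftT S b).card = S.card + cond b 1 0 := by
  cases b
  · simp [liftT]
  · rw [liftT, cond_true, cond_true,
      Finset.card_insert_of_notMem (by simp), Finset.card_map]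

def optEquiv : Finset V × Bool ≃ Finset (Option V) where
  toFun p := liftT p.1 p.2
  invFun T := (Finset.eraseNone T, decide (none ∈ T))
  left_inv p := by
    rcases p with ⟨S, b⟩
    refine Prod.ext ?_ ?_
    · ext a
      simp [Finset.mem_eraseNone]
    · cases b <;> simp
  right_inv T := by
    ext x
    cases x with
    | none => simp
    | some a => simp [Finset.mem_eraseNone]

lemma keep_addIsolated (G : MarkedGraph V) (loop : Bool) (S : Finset V) (b : Bool) :
    (G.addIsolated loop).keep (liftT S b)
      = insert none ((G.keep S).map Function.Embedding.some) := by
  ext x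
  cases x with
  | none => simp [keep, addIsolated]
  | some a =>
    have hdiag : delta (liftT S b) (some a) (some a) = delta S a a := by
      simp [delta, Matrix.diagonal_apply_eq]
    simp only [keep, Finset.mem_filter, Finset.mem_univ, true_and, Matrix.add_apply, hdiag]
    simp [addIsolated, hdiag]

lemma nullity_subMat_addIsolated (G : MarkedGraph V) (loop : Bool) (S : Finset V) (b : Bool) :
    nullity ((G.addIsolated loop).subMat (liftT S b))
      = nullity (G.subMat S)
        + if ((if loop then 1 else 0) + (if b then 1 else 0) : ZMod 2) = 0 then 1 else 0 := by
  have hK := keep_addIsolated G loop S b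
  let f : Option {a : V // a ∈ G.keep S}
      ≃ {x : Option V // x ∈ (G.addIsolated loop).keep (liftT S b)} :=
    { toFun := fun y => match y with
        | none => ⟨none, by rw [hK]; simp⟩
        | some a => ⟨some a.1, by rw [hK]; simp [a.2]⟩
      invFun := fun x => match x with
        | ⟨none, _⟩ => none
        | ⟨some a, h⟩ => some ⟨a, by rw [hK] at h; simpa using h⟩
      left_inv := fun y => by rcases y with _ | a <;> rfl
      right_inv := fun x => by rcases x with ⟨_ | a, h⟩ <;> rfl }
  rw [← nullity_submatrix f ((G.addIsolated loop).subMat (liftT S b))]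
  refine nullity_option _ (G.subMat S) _ ?_ ?_ ?_ ?_
  · intro a b'
    show ((G.addIsolated loop).adj + delta (liftT S b)) (some a.1) (some b'.1)
        = (G.adj + delta S) a.1 b'.1
    rw [Matrix.add_apply, Matrix.add_apply]
    simp [addIsolated, delta, Matrix.add_apply, Matrix.diagonal_apply]
  · intro a
    show ((G.addIsolated loop).adj + delta (liftT S b)) none (some a.1) = 0
    rw [Matrix.add_apply]
    simp [addIsolated, delta, Matrix.add_apply, Matrix.diagonal_apply]
  · intro a
    show ((G.addIsolated loop).adj + delta (liftT S b)) (some a.1) none = 0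
    rw [Matrix.add_apply]
    simp [addIsolated, delta, Matrix.add_apply, Matrix.diagonal_apply]
  · show ((G.addIsolated loop).adj + delta (liftT S b)) none none
        = (if loop then 1 else 0) + (if b then 1 else 0)
    rw [Matrix.add_apply]
    cases b <;> cases loop <;>
      simp [addIsolated, delta, Matrix.add_apply, Matrix.diagonal_apply]

lemma numLoops_addIsolated (G : MarkedGraph V) (loop : Bool) :
    (G.addIsolated loop).numLoops = G.numLoops + cond loop 1 0 := by
  unfold numLoops
  rw [Finset.card_filter, Finset.card_filter, Fintype.sum_option]
  cases loop <;> simp [addIsolated, add_comm]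

end Omega1
section Bracket

variable {V : Type} [Fintype V] [DecidableEq V]

lemma nullity_ite_val (loop b : Bool) :
    (if ((if loop then 1 else 0) + (if b then 1 else 0) : ZMod 2) = 0 then 1 else 0)
      = if loop = b then 1 else 0 := by
  cases loop <;> cases b <;> decide

lemma bracket_addIsolated (G : MarkedGraph V) (loop : Bool) :
    (G.addIsolated loop).bracket
      = (if loop then (X 0 + X 1 * X 2 : MvPolynomial (Fin 3) ℤ) else X 0 * X 2 + X 1)
        * G.bracket := by
  unfold bracket
  rw [show (G.addIsolated loop).freeLoops = G.freeLoops from rfl]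
  rw [← Fintype.sum_equiv optEquiv (fun p : Finset V × Bool =>
      (X 0 ^ (Fintype.card (Option V) - (liftT p.1 p.2).card) * X 1 ^ (liftT p.1 p.2).card
        * X 2 ^ nullity ((G.addIsolated loop).subMat (liftT p.1 p.2)) : MvPolynomial (Fin 3) ℤ))
      _ (fun p => rfl)]
  rw [Fintype.sum_prod_type]
  have main : ∀ S : Finset V,
      (∑ b : Bool, (X 0 ^ (Fintype.card (Option V) - (liftT S b).card) * X 1 ^ (liftT S b).card
        * X 2 ^ nullity ((G.addIsolated loop).subMat (liftT S b)) : MvPolynomial (Fin 3) ℤ))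
      = (if loop then (X 0 + X 1 * X 2 : MvPolynomial (Fin 3) ℤ) else X 0 * X 2 + X 1)
        * (X 0 ^ (Fintype.card V - S.card) * X 1 ^ S.card
            * X 2 ^ nullity (G.subMat S)) := by
    intro S
    have hk : S.card ≤ Fintype.card V := Finset.card_le_univ S
    simp only [Fintype.sum_bool, card_liftT, nullity_subMat_addIsolated, nullity_ite_val,
      cond_true, cond_false, Fintype.card_option, add_zero]
    rw [show Fintype.card V + 1 - (S.card + 1) = Fintype.card V - S.card from by omega,
      show Fintype.card V + 1 - S.card = (Fintype.card V - S.card) + 1 from by omega]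
    cases loop <;> norm_num <;> ring
  rw [show (∑ S : Finset V, ∑ b : Bool,
      (X 0 ^ (Fintype.card (Option V) - (liftT S b).card) * X 1 ^ (liftT S b).card
        * X 2 ^ nullity ((G.addIsolated loop).subMat (liftT S b)) : MvPolynomial (Fin 3) ℤ))
      = ∑ S : Finset V, (if loop then (X 0 + X 1 * X 2 : MvPolynomial (Fin 3) ℤ)
          else X 0 * X 2 + X 1) * (X 0 ^ (Fintype.card V - S.card) * X 1 ^ S.card
            * X 2 ^ nullity (G.subMat S))
      from Finset.sum_congr rfl fun S _ => main S]
  rw [← Finset.mul_sum]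
  ring

end Bracket
section Jones

variable {V : Type} [Fintype V] [DecidableEq V]

lemma T_mul_eq (a b : ℤ) :
    (LaurentPolynomial.T a * LaurentPolynomial.T b : LaurentPolynomial ℤ)
      = LaurentPolynomial.T (a + b) := (LaurentPolynomial.T_add a b).symm

lemma fac_false :
    (MvPolynomial.aeval ![LaurentPolynomial.T (-1), LaurentPolynomial.T 1,
        -LaurentPolynomial.T 2 - LaurentPolynomial.T (-2)]
      ((X 0 : MvPolynomial (Fin 3) ℤ) * X 2 + X 1) : LaurentPolynomial ℤ)
      = -LaurentPolynomial.T (-3) := by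
  simp only [map_add, _root_.map_mul, MvPolynomial.aeval_X, Matrix.cons_val_zero, Matrix.cons_val_one,
    Matrix.head_cons, Matrix.cons_val_two, Matrix.tail_cons]
  rw [mul_sub, mul_neg, T_mul_eq, T_mul_eq]
  norm_num
  ring

lemma fac_true :
    (MvPolynomial.aeval ![LaurentPolynomial.T (-1), LaurentPolynomial.T 1,
        -LaurentPolynomial.T 2 - LaurentPolynomial.T (-2)]
      ((X 0 : MvPolynomial (Fin 3) ℤ) + X 1 * X 2) : LaurentPolynomial ℤ)
      = -LaurentPolynomial.T 3 := by
  simp only [map_add, _root_.map_mul, MvPolynomial.aeval_X, Matrix.cons_val_zero, Matrix.cons_val_one,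
    Matrix.head_cons, Matrix.cons_val_two, Matrix.tail_cons]
  rw [mul_sub, mul_neg, T_mul_eq, T_mul_eq]
  norm_num

end Jones
end MarkedGraph
/-- The Jones polynomial is invariant under the Ω.1 move of adjoining
an isolated, unmarked vertex (looped or unlooped). -/
theorem jones_omega1 {V : Type} [Fintype V] [DecidableEq V]
    (G : MarkedGraph V) (hsym : G.adj.IsSymm) (loop : Bool) :
    (G.addIsolated loop).jones = G.jones := by
  unfold MarkedGraph.jones
  rw [MarkedGraph.bracket_addIsolated, _root_.map_mul, MarkedGraph.numLoops_addIsolated,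
    Fintype.card_option]
  have h33 : (LaurentPolynomial.T 3 * LaurentPolynomial.T (-3) : LaurentPolynomial ℤ) = 1 := by
    rw [MarkedGraph.T_mul_eq]; norm_num
  set E : LaurentPolynomial ℤ := MvPolynomial.aeval
    ![LaurentPolynomial.T (-1), LaurentPolynomial.T 1,
      -LaurentPolynomial.T 2 - LaurentPolynomial.T (-2)] G.bracket with hE
  cases loop
  · simp only [Bool.false_eq_true, if_false, cond_false, Nat.add_zero]
    rw [MarkedGraph.fac_false]
    push_cast
    rw [show (3 * ((Fintype.card V : ℤ) + 1) - 6 * (G.numLoops : ℤ))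
        = (3 * (Fintype.card V : ℤ) - 6 * (G.numLoops : ℤ)) + 3 from by ring,
      LaurentPolynomial.T_add, pow_succ]
    linear_combination ((-1 : LaurentPolynomial ℤ) ^ Fintype.card V *
      LaurentPolynomial.T (3 * (Fintype.card V : ℤ) - 6 * (G.numLoops : ℤ)) * E) * h33
  · simp only [if_true, cond_true]
    rw [MarkedGraph.fac_true]
    push_cast
    rw [show (3 * ((Fintype.card V : ℤ) + 1) - 6 * ((G.numLoops : ℤ) + 1))
        = (3 * (Fintype.card V : ℤ) - 6 * (G.numLoops : ℤ)) + (-3) from by ring,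
      LaurentPolynomial.T_add, pow_succ]
    linear_combination ((-1 : LaurentPolynomial ℤ) ^ Fintype.card V *
      LaurentPolynomial.T (3 * (Fintype.card V : ℤ) - 6 * (G.numLoops : ℤ)) * E) * h33
end

section
/- Suppose G is a marked graph with two unmarked vertices v and w such that v is looped, w is unlooped, and v and w are adjacent to exactly the same vertices outside {v,w}. Then V_G = V_{G − v − w}; that is, the marked-graph Jones polynomial is invariant under this Ω.2 move. -/
open MvPolynomial

namespace Omega2
open Matrix

lemma F2_cases (e : ZMod 2) : e = 0 ∨ e = 1 := by revert e; decide

lemma htwo : (2 : ZMod 2) = 0 := by decide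

variable {ι ι₁ ι₂ : Type*} [Fintype ι] [Fintype ι₁] [Fintype ι₂]

lemma ker_iff {M : Matrix ι ι (ZMod 2)} {x : ι → ZMod 2} :
    x ∈ LinearMap.ker M.mulVecLin ↔ M *ᵥ x = 0 := by
  rw [LinearMap.mem_ker, Matrix.mulVecLin_apply]

lemma map_zero_of_add {A B : Type*} [AddCommGroup A] [AddCommGroup B] {f : A → B}
    (hadd : ∀ x y, f (x + y) = f x + f y) : f 0 = 0 := by
  have h := hadd 0 0
  rw [add_zero] at h
  conv_lhs at h => rw [← add_zero (f 0)]
  exact (add_left_cancel h).symm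

lemma map_smul_of_add {A B : Type*} [AddCommGroup A] [Module (ZMod 2) A] [AddCommGroup B]
    [Module (ZMod 2) B] {f : A → B}
    (hadd : ∀ x y, f (x + y) = f x + f y) (r : ZMod 2) (x : A) : f (r • x) = r • f x := by
  rcases F2_cases r with h | h <;> subst h <;>
    simp [map_zero_of_add hadd]

lemma nullity_eq_of_equiv (M₁ : Matrix ι₁ ι₁ (ZMod 2)) (M₂ : Matrix ι₂ ι₂ (ZMod 2))
    (f : (ι₁ → ZMod 2) → (ι₂ → ZMod 2)) (g : (ι₂ → ZMod 2) → (ι₁ → ZMod 2))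
    (hfadd : ∀ x y, f (x + y) = f x + f y)
    (hgadd : ∀ x y, g (x + y) = g x + g y)
    (hf : ∀ x, M₁ *ᵥ x = 0 → M₂ *ᵥ f x = 0)
    (hg : ∀ y, M₂ *ᵥ y = 0 → M₁ *ᵥ g y = 0)
    (hgf : ∀ x, M₁ *ᵥ x = 0 → g (f x) = x)
    (hfg : ∀ y, M₂ *ᵥ y = 0 → f (g y) = y) :
    MarkedGraph.nullity M₁ = MarkedGraph.nullity M₂ := by
  have e : LinearMap.ker M₁.mulVecLin ≃ₗ[ZMod 2] LinearMap.ker M₂.mulVecLin :=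
    { toFun := fun x => ⟨f x.1, ker_iff.mpr (hf x.1 (ker_iff.mp x.2))⟩
      map_add' := fun x y => Subtype.ext (hfadd x.1 y.1)
      map_smul' := fun r x => Subtype.ext (map_smul_of_add hfadd r x.1)
      invFun := fun y => ⟨g y.1, ker_iff.mpr (hg y.1 (ker_iff.mp y.2))⟩
      left_inv := fun x => Subtype.ext (hgf x.1 (ker_iff.mp x.2))
      right_inv := fun y => Subtype.ext (hfg y.1 (ker_iff.mp y.2)) }
  exact e.finrank_eq

lemma nullity_eq_add_one_of_equiv (M₁ : Matrix ι₁ ι₁ (ZMod 2)) (M₂ : Matrix ι₂ ι₂ (ZMod 2))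
    (f : ((ι₁ → ZMod 2) × ZMod 2) → (ι₂ → ZMod 2))
    (g : (ι₂ → ZMod 2) → (ι₁ → ZMod 2) × ZMod 2)
    (hfadd : ∀ x y, f (x + y) = f x + f y)
    (hgadd : ∀ x y, g (x + y) = g x + g y)
    (hf : ∀ x r, M₁ *ᵥ x = 0 → M₂ *ᵥ f (x, r) = 0)
    (hg : ∀ y, M₂ *ᵥ y = 0 → M₁ *ᵥ (g y).1 = 0)
    (hgf : ∀ x r, M₁ *ᵥ x = 0 → g (f (x, r)) = (x, r))
    (hfg : ∀ y, M₂ *ᵥ y = 0 → f (g y) = y) :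
    MarkedGraph.nullity M₂ = MarkedGraph.nullity M₁ + 1 := by
  have e : (LinearMap.ker M₁.mulVecLin × ZMod 2) ≃ₗ[ZMod 2] LinearMap.ker M₂.mulVecLin :=
    { toFun := fun p => ⟨f (p.1.1, p.2), ker_iff.mpr (hf p.1.1 p.2 (ker_iff.mp p.1.2))⟩
      map_add' := fun p q => by
        apply Subtype.ext
        show f _ = f _ + f _
        rw [← hfadd]; rfl
      map_smul' := fun r p => by
        apply Subtype.ext
        show f _ = r • f _
        rw [← map_smul_of_add hfadd]; rfl
      invFun := fun y => (⟨(g y.1).1, ker_iff.mpr (hg y.1 (ker_iff.mp y.2))⟩, (g y.1).2)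
      left_inv := fun p => by
        obtain ⟨⟨x, hx⟩, r⟩ := p
        have h := hgf x r (ker_iff.mp hx)
        apply Prod.ext
        · apply Subtype.ext
          show (g (f (x, r))).1 = x
          exact congrArg Prod.fst h
        · show (g (f (x, r))).2 = r
          exact congrArg Prod.snd h
      right_inv := fun y => by
        apply Subtype.ext
        have h := hfg y.1 (ker_iff.mp y.2)
        show f ((g y.1).1, (g y.1).2) = y.1
        rw [show ((g y.1).1, (g y.1).2) = g y.1 from rfl]
        exact h }
  have hfr := e.finrank_eq
  rw [Module.finrank_prod, Module.finrank_self] at hfr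
  show Module.finrank (ZMod 2) (LinearMap.ker M₂.mulVecLin)
      = Module.finrank (ZMod 2) (LinearMap.ker M₁.mulVecLin) + 1
  omega

lemma nullity_add_rank (M : Matrix ι ι (ZMod 2)) : MarkedGraph.nullity M + M.rank = Fintype.card ι := by
  have h := LinearMap.finrank_range_add_finrank_ker M.mulVecLin
  rw [Module.finrank_fintype_fun_eq_card] at h
  rw [MarkedGraph.nullity, Matrix.rank]
  omega

lemma nullity_submatrix (M : Matrix ι₂ ι₂ (ZMod 2)) (κ : ι₁ ≃ ι₂) :
    MarkedGraph.nullity (M.submatrix κ κ) = MarkedGraph.nullity M := by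
  have h1 := nullity_add_rank (M.submatrix κ κ)
  have h2 := nullity_add_rank M
  have h3 : (M.submatrix (κ : ι₁ → ι₂) (κ : ι₁ → ι₂)).rank = M.rank := Matrix.rank_submatrix M κ κ
  have h4 : Fintype.card ι₁ = Fintype.card ι₂ := Fintype.card_congr κ
  omega

def Mmat (N : Matrix ι ι (ZMod 2)) (c : ι → ZMod 2) (a b e : ZMod 2) :
    Matrix (ι ⊕ Bool) (ι ⊕ Bool) (ZMod 2) :=
  Matrix.of fun i j =>
    match i, j with
    | Sum.inl i, Sum.inl j => N i j
    | Sum.inl i, Sum.inr _ => c i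
    | Sum.inr _, Sum.inl j => c j
    | Sum.inr s, Sum.inr t => if s then (if t then b else e) else (if t then e else a)

def Pmat (N : Matrix ι ι (ZMod 2)) (c : ι → ZMod 2) (e : ZMod 2) :
    Matrix (ι ⊕ Unit) (ι ⊕ Unit) (ZMod 2) :=
  Matrix.of fun i j =>
    match i, j with
    | Sum.inl i, Sum.inl j => N i j
    | Sum.inl i, Sum.inr _ => c i
    | Sum.inr _, Sum.inl j => c j
    | Sum.inr _, Sum.inr _ => e

lemma Mmat_ker_iff (N : Matrix ι ι (ZMod 2)) (c : ι → ZMod 2) (a b e : ZMod 2)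
    (y : ι ⊕ Bool → ZMod 2) :
    Mmat N c a b e *ᵥ y = 0 ↔
      ((∀ i, (N *ᵥ fun j => y (Sum.inl j)) i
          + (y (Sum.inr false) + y (Sum.inr true)) * c i = 0) ∧
        (c ⬝ᵥ fun j => y (Sum.inl j)) + a * y (Sum.inr false) + e * y (Sum.inr true) = 0 ∧
        (c ⬝ᵥ fun j => y (Sum.inl j)) + e * y (Sum.inr false) + b * y (Sum.inr true) = 0) := by
  rw [funext_iff, Sum.forall, Bool.forall_bool]
  simp only [Matrix.mulVec, dotProduct, Fintype.sum_sum_type, Fintype.sum_bool,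
    Mmat, Matrix.of_apply, Pi.zero_apply, Bool.false_eq_true, if_true, if_false, ite_true,
    ite_false]
  constructor
  · rintro ⟨h1, h2, h3⟩
    refine ⟨fun i => by linear_combination h1 i, by linear_combination h2, by linear_combination h3⟩
  · rintro ⟨h1, h2, h3⟩
    exact ⟨fun i => by linear_combination h1 i, by linear_combination h2, by linear_combination h3⟩

lemma Pmat_ker_iff (N : Matrix ι ι (ZMod 2)) (c : ι → ZMod 2) (e : ZMod 2)
    (z : ι ⊕ Unit → ZMod 2) :
    Pmat N c e *ᵥ z = 0 ↔
      ((∀ i, (N *ᵥ fun j => z (Sum.inl j)) i + z (Sum.inr ()) * c i = 0) ∧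
        (c ⬝ᵥ fun j => z (Sum.inl j)) + e * z (Sum.inr ()) = 0) := by
  rw [funext_iff, Sum.forall]
  simp only [Matrix.mulVec, dotProduct, Fintype.sum_sum_type, Fintype.sum_unique,
    Pmat, Matrix.of_apply, Pi.zero_apply]
  constructor
  · rintro ⟨h1, h2⟩
    exact ⟨fun i => by linear_combination h1 i, by linear_combination h2 ()⟩
  · rintro ⟨h1, h2⟩
    exact ⟨fun i => by linear_combination h1 i, fun u => by linear_combination h2⟩

lemma nullity_M10 (N : Matrix ι ι (ZMod 2)) (c : ι → ZMod 2) (e : ZMod 2) :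
    MarkedGraph.nullity (Mmat N c 1 0 e) = MarkedGraph.nullity (Pmat N c e) := by
  have gdef : ∀ y : ι ⊕ Bool → ZMod 2, True := fun _ => trivial
  rcases F2_cases e with rfl | rfl
  · refine (nullity_eq_of_equiv (Pmat N c 0) (Mmat N c 1 0 0)
      (fun z => Sum.elim (fun i => z (Sum.inl i)) (fun b => if b then z (Sum.inr ()) else 0))
      (fun y => Sum.elim (fun i => y (Sum.inl i)) (fun _ => y (Sum.inr false) + y (Sum.inr true)))
      ?_ ?_ ?_ ?_ ?_ ?_).symm
    · intro x y; funext i; cases i with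
      | inl i => simp
      | inr b => cases b <;> simp
    · intro x y; funext i; cases i with
      | inl i => simp
      | inr b => simp; ring
    · intro z hz
      rw [Pmat_ker_iff] at hz
      obtain ⟨h1, h2⟩ := hz
      rw [Mmat_ker_iff]
      simp only [Sum.elim_inl, Sum.elim_inr, if_true, if_false, ite_true, ite_false,
        Bool.false_eq_true]
      exact ⟨fun i => by linear_combination h1 i, by linear_combination h2,
        by linear_combination h2⟩
    · intro y hy
      rw [Mmat_ker_iff] at hy
      obtain ⟨h1, h2, h3⟩ := hy
      rw [Pmat_ker_iff]
      simp only [Sum.elim_inl, Sum.elim_inr]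
      exact ⟨fun i => by linear_combination h1 i, by linear_combination h3⟩
    · intro z hz; funext i
      cases i with
      | inl i => simp
      | inr u => cases u; simp
    · intro y hy
      rw [Mmat_ker_iff] at hy
      obtain ⟨h1, h2, h3⟩ := hy
      funext i
      cases i with
      | inl i => simp
      | inr b =>
        cases b <;>
          simp only [Sum.elim_inl, Sum.elim_inr, if_true, if_false, ite_true, ite_false,
            Bool.false_eq_true]
        · linear_combination h3 - h2
        · linear_combination h2 - h3
  · refine (nullity_eq_of_equiv (Pmat N c 1) (Mmat N c 1 0 1)
      (fun z => Sum.elim (fun i => z (Sum.inl i)) (fun b => if b then 0 else z (Sum.inr ())))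
      (fun y => Sum.elim (fun i => y (Sum.inl i)) (fun _ => y (Sum.inr false) + y (Sum.inr true)))
      ?_ ?_ ?_ ?_ ?_ ?_).symm
    · intro x y; funext i; cases i with
      | inl i => simp
      | inr b => cases b <;> simp
    · intro x y; funext i; cases i with
      | inl i => simp
      | inr b => simp; ring
    · intro z hz
      rw [Pmat_ker_iff] at hz
      obtain ⟨h1, h2⟩ := hz
      rw [Mmat_ker_iff]
      simp only [Sum.elim_inl, Sum.elim_inr, if_true, if_false, ite_true, ite_false,
        Bool.false_eq_true]
      exact ⟨fun i => by linear_combination h1 i, by linear_combination h2,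
        by linear_combination h2⟩
    · intro y hy
      rw [Mmat_ker_iff] at hy
      obtain ⟨h1, h2, h3⟩ := hy
      rw [Pmat_ker_iff]
      simp only [Sum.elim_inl, Sum.elim_inr]
      exact ⟨fun i => by linear_combination h1 i, by linear_combination h2⟩
    · intro z hz; funext i
      cases i with
      | inl i => simp
      | inr u => cases u; simp
    · intro y hy
      rw [Mmat_ker_iff] at hy
      obtain ⟨h1, h2, h3⟩ := hy
      funext i
      cases i with
      | inl i => simp
      | inr b =>
        cases b <;>
          simp only [Sum.elim_inl, Sum.elim_inr, if_true, if_false, ite_true, ite_false,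
            Bool.false_eq_true]
        · linear_combination h2 - h3
        · linear_combination h3 - h2

lemma nullity_M01 (N : Matrix ι ι (ZMod 2)) (c : ι → ZMod 2) (e : ZMod 2) :
    MarkedGraph.nullity (Mmat N c 0 1 e) = MarkedGraph.nullity (Pmat N c e) := by
  rcases F2_cases e with rfl | rfl
  · refine (nullity_eq_of_equiv (Pmat N c 0) (Mmat N c 0 1 0)
      (fun z => Sum.elim (fun i => z (Sum.inl i)) (fun b => if b then 0 else z (Sum.inr ())))
      (fun y => Sum.elim (fun i => y (Sum.inl i)) (fun _ => y (Sum.inr false) + y (Sum.inr true)))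
      ?_ ?_ ?_ ?_ ?_ ?_).symm
    · intro x y; funext i; cases i with
      | inl i => simp
      | inr b => cases b <;> simp
    · intro x y; funext i; cases i with
      | inl i => simp
      | inr b => simp; ring
    · intro z hz
      rw [Pmat_ker_iff] at hz
      obtain ⟨h1, h2⟩ := hz
      rw [Mmat_ker_iff]
      simp only [Sum.elim_inl, Sum.elim_inr, if_true, if_false, ite_true, ite_false,
        Bool.false_eq_true]
      exact ⟨fun i => by linear_combination h1 i, by linear_combination h2,
        by linear_combination h2⟩
    · intro y hy
      rw [Mmat_ker_iff] at hy
      obtain ⟨h1, h2, h3⟩ := hy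
      rw [Pmat_ker_iff]
      simp only [Sum.elim_inl, Sum.elim_inr]
      exact ⟨fun i => by linear_combination h1 i, by linear_combination h2⟩
    · intro z hz; funext i
      cases i with
      | inl i => simp
      | inr u => cases u; simp
    · intro y hy
      rw [Mmat_ker_iff] at hy
      obtain ⟨h1, h2, h3⟩ := hy
      funext i
      cases i with
      | inl i => simp
      | inr b =>
        cases b <;>
          simp only [Sum.elim_inl, Sum.elim_inr, if_true, if_false, ite_true, ite_false,
            Bool.false_eq_true]
        · linear_combination h3 - h2
        · linear_combination h2 - h3
  · refine (nullity_eq_of_equiv (Pmat N c 1) (Mmat N c 0 1 1)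
      (fun z => Sum.elim (fun i => z (Sum.inl i)) (fun b => if b then z (Sum.inr ()) else 0))
      (fun y => Sum.elim (fun i => y (Sum.inl i)) (fun _ => y (Sum.inr false) + y (Sum.inr true)))
      ?_ ?_ ?_ ?_ ?_ ?_).symm
    · intro x y; funext i; cases i with
      | inl i => simp
      | inr b => cases b <;> simp
    · intro x y; funext i; cases i with
      | inl i => simp
      | inr b => simp; ring
    · intro z hz
      rw [Pmat_ker_iff] at hz
      obtain ⟨h1, h2⟩ := hz
      rw [Mmat_ker_iff]
      simp only [Sum.elim_inl, Sum.elim_inr, if_true, if_false, ite_true, ite_false,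
        Bool.false_eq_true]
      exact ⟨fun i => by linear_combination h1 i, by linear_combination h2,
        by linear_combination h2⟩
    · intro y hy
      rw [Mmat_ker_iff] at hy
      obtain ⟨h1, h2, h3⟩ := hy
      rw [Pmat_ker_iff]
      simp only [Sum.elim_inl, Sum.elim_inr]
      exact ⟨fun i => by linear_combination h1 i, by linear_combination h3⟩
    · intro z hz; funext i
      cases i with
      | inl i => simp
      | inr u => cases u; simp
    · intro y hy
      rw [Mmat_ker_iff] at hy
      obtain ⟨h1, h2, h3⟩ := hy
      funext i
      cases i with
      | inl i => simp
      | inr b =>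
        cases b <;>
          simp only [Sum.elim_inl, Sum.elim_inr, if_true, if_false, ite_true, ite_false,
            Bool.false_eq_true]
        · linear_combination h2 - h3
        · linear_combination h3 - h2

lemma nullity_Maa' (N : Matrix ι ι (ZMod 2)) (c : ι → ZMod 2) (e : ZMod 2) :
    MarkedGraph.nullity (Mmat N c (e + 1) (e + 1) e) = MarkedGraph.nullity N := by
  refine (nullity_eq_of_equiv N (Mmat N c (e + 1) (e + 1) e)
    (fun x => Sum.elim x (fun _ => c ⬝ᵥ x))
    (fun y => fun i => y (Sum.inl i))
    ?_ ?_ ?_ ?_ ?_ ?_).symm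
  · intro x y; funext i; cases i with
    | inl i => simp
    | inr b => simp [dotProduct_add]
  · intro x y; funext i; simp
  · intro x hx
    have hx' : ∀ i, (N *ᵥ x) i = 0 := fun i => by rw [hx]; simp
    rw [Mmat_ker_iff]
    simp only [Sum.elim_inl, Sum.elim_inr]
    refine ⟨fun i => ?_, ?_, ?_⟩
    · linear_combination hx' i + (c ⬝ᵥ x * c i) * htwo
    · linear_combination ((1 + e) * (c ⬝ᵥ x)) * htwo
    · linear_combination ((1 + e) * (c ⬝ᵥ x)) * htwo
  · intro y hy
    rw [Mmat_ker_iff] at hy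
    obtain ⟨h1, h2, h3⟩ := hy
    have hst : y (Sum.inr false) = y (Sum.inr true) := by linear_combination h2 - h3
    funext i
    show (N *ᵥ fun j => y (Sum.inl j)) i = 0
    linear_combination h1 i - c i * hst - (c i * y (Sum.inr true)) * htwo
  · intro x hx; funext i; simp
  · intro y hy
    rw [Mmat_ker_iff] at hy
    obtain ⟨h1, h2, h3⟩ := hy
    have hst : y (Sum.inr false) = y (Sum.inr true) := by linear_combination h2 - h3
    funext i
    cases i with
    | inl i => simp
    | inr b =>
      cases b <;> simp only [Sum.elim_inl, Sum.elim_inr]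
      · linear_combination h2 - e * hst
          - (y (Sum.inr false) + e * y (Sum.inr true)) * htwo
      · linear_combination h3 - e * hst
          - (y (Sum.inr true) + e * y (Sum.inr true)) * htwo

lemma nullity_Maa (N : Matrix ι ι (ZMod 2)) (c : ι → ZMod 2) (e : ZMod 2) :
    MarkedGraph.nullity (Mmat N c e e e) = MarkedGraph.nullity (Pmat N c e) + 1 := by
  refine nullity_eq_add_one_of_equiv (Pmat N c e) (Mmat N c e e e)
    (fun p => Sum.elim (fun i => p.1 (Sum.inl i))
      (fun b => if b then p.1 (Sum.inr ()) + p.2 else p.2))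
    (fun y => (Sum.elim (fun i => y (Sum.inl i))
      (fun _ => y (Sum.inr false) + y (Sum.inr true)), y (Sum.inr false)))
    ?_ ?_ ?_ ?_ ?_ ?_
  · intro p q; funext i; cases i with
    | inl i => simp
    | inr b => cases b <;> simp <;> ring
  · intro x y
    apply Prod.ext
    · funext i; cases i with
      | inl i => simp
      | inr b => simp; ring
    · simp
  · intro z r hz
    rw [Pmat_ker_iff] at hz
    obtain ⟨h1, h2⟩ := hz
    rw [Mmat_ker_iff]
    simp only [Sum.elim_inl, Sum.elim_inr, if_true, if_false, ite_true, ite_false,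
      Bool.false_eq_true]
    refine ⟨fun i => ?_, ?_, ?_⟩
    · linear_combination h1 i + (r * c i) * htwo
    · linear_combination h2 + (e * r) * htwo
    · linear_combination h2 + (e * r) * htwo
  · intro y hy
    rw [Mmat_ker_iff] at hy
    obtain ⟨h1, h2, h3⟩ := hy
    rw [Pmat_ker_iff]
    simp only [Sum.elim_inl, Sum.elim_inr]
    exact ⟨fun i => by linear_combination h1 i, by linear_combination h2⟩
  · intro z r hz
    apply Prod.ext
    · funext i
      cases i with
      | inl i => simp
      | inr u =>
        cases u
        simp only [Sum.elim_inl, Sum.elim_inr, if_true, if_false, ite_true, ite_false,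
          Bool.false_eq_true]
        linear_combination r * htwo
    · simp
  · intro y hy
    rw [Mmat_ker_iff] at hy
    obtain ⟨h1, h2, h3⟩ := hy
    funext i
    cases i with
    | inl i => simp
    | inr b =>
      cases b <;>
        simp only [Sum.elim_inl, Sum.elim_inr, if_true, if_false, ite_true, ite_false,
          Bool.false_eq_true]
      · linear_combination y (Sum.inr false) * htwo

end Omega2

/- ========== graph bookkeeping ========== -/

namespace Omega2

open Finset

variable {V : Type} [Fintype V] [DecidableEq V]

def combine (v w : V) (T' : Finset {x : V // x ∉ ({v, w} : Finset V)}) (bv bw : Bool) :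
    Finset V :=
  T'.map ⟨Subtype.val, Subtype.val_injective⟩ ∪
    ((if bv then {v} else ∅) ∪ (if bw then {w} else ∅))

lemma not_mem_map_of_out {v w : V} (T' : Finset {x : V // x ∉ ({v, w} : Finset V)})
    {x : V} (hx : x ∈ ({v, w} : Finset V)) :
    x ∉ T'.map ⟨Subtype.val, Subtype.val_injective⟩ := by
  rw [Finset.mem_map]
  rintro ⟨a, _, rfl⟩
  exact a.2 hx

lemma mem_combine_v {v w : V} (T' : Finset {x : V // x ∉ ({v, w} : Finset V)}) (bv bw : Bool)
    (hvw : v ≠ w) : v ∈ combine v w T' bv bw ↔ bv = true := by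
  have h := not_mem_map_of_out T' (show v ∈ ({v, w} : Finset V) by simp)
  cases bv <;> cases bw <;> simp [combine, h, hvw]

lemma mem_combine_w {v w : V} (T' : Finset {x : V // x ∉ ({v, w} : Finset V)}) (bv bw : Bool)
    (hvw : v ≠ w) : w ∈ combine v w T' bv bw ↔ bw = true := by
  have h := not_mem_map_of_out T' (show w ∈ ({v, w} : Finset V) by simp)
  cases bv <;> cases bw <;> simp [combine, h, hvw, Ne.symm hvw]

lemma mem_combine_other {v w : V} (T' : Finset {x : V // x ∉ ({v, w} : Finset V)})
    (bv bw : Bool) (x : V) (hx : x ∉ ({v, w} : Finset V)) :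
    x ∈ combine v w T' bv bw ↔ ⟨x, hx⟩ ∈ T' := by
  have hxv : x ≠ v := by rintro rfl; exact hx (by simp)
  have hxw : x ≠ w := by rintro rfl; exact hx (by simp)
  cases bv <;> cases bw <;>
    simp [combine, hxv, hxw, Finset.mem_map, Subtype.ext_iff]

lemma card_combine {v w : V} (T' : Finset {x : V // x ∉ ({v, w} : Finset V)}) (bv bw : Bool)
    (hvw : v ≠ w) :
    (combine v w T' bv bw).card
      = T'.card + (if bv then 1 else 0) + (if bw then 1 else 0) := by
  rw [combine, Finset.card_union_of_disjoint, Finset.card_union_of_disjoint,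
    Finset.card_map]
  · cases bv <;> cases bw <;> simp [add_assoc]
  · cases bv <;> cases bw <;> simp [Finset.disjoint_left, hvw]
  · rw [Finset.disjoint_left]
    intro x hxm hxu
    have : x ∈ ({v, w} : Finset V) := by
      rcases Finset.mem_union.mp hxu with h | h
      · rcases bv <;> simp_all
      · rcases bw <;> simp_all
    exact not_mem_map_of_out T' this hxm

def splitEquiv (v w : V) (hvw : v ≠ w) :
    (Finset {x : V // x ∉ ({v, w} : Finset V)} × Bool × Bool) ≃ Finset V where
  toFun p := combine v w p.1 p.2.1 p.2.2
  invFun T := (T.subtype _, decide (v ∈ T), decide (w ∈ T))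
  left_inv := by
    rintro ⟨T', bv, bw⟩
    have h1 : (combine v w T' bv bw).subtype (fun x => x ∉ ({v, w} : Finset V)) = T' := by
      ext ⟨x, hx⟩
      rw [Finset.mem_subtype]
      exact mem_combine_other T' bv bw x hx
    have h2 : decide (v ∈ combine v w T' bv bw) = bv := by
      cases bv <;> simp [mem_combine_v T' _ _ hvw]
    have h3 : decide (w ∈ combine v w T' bv bw) = bw := by
      cases bw <;> simp [mem_combine_w T' _ _ hvw]
    simp only [h1, h2, h3]
  right_inv := by
    intro T
    ext x
    by_cases hxv : x = v
    · subst hxv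
      rw [mem_combine_v _ _ _ hvw]
      simp
    · by_cases hxw : x = w
      · subst hxw
        rw [mem_combine_w _ _ _ hvw]
        simp
      · have hx : x ∉ ({v, w} : Finset V) := by simp [hxv, hxw]
        rw [mem_combine_other _ _ _ x hx, Finset.mem_subtype]

lemma splitEquiv_apply (v w : V) (hvw : v ≠ w)
    (T' : Finset {x : V // x ∉ ({v, w} : Finset V)}) (bv bw : Bool) :
    splitEquiv v w hvw (T', bv, bw) = combine v w T' bv bw := rfl

lemma card_pair_vw (v w : V) (hvw : v ≠ w) : ({v, w} : Finset V).card = 2 := by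
  rw [Finset.card_insert_of_notMem (by simp [hvw]), Finset.card_singleton]

lemma card_out (v w : V) (hvw : v ≠ w) :
    Fintype.card V = Fintype.card {x : V // x ∉ ({v, w} : Finset V)} + 2 := by
  have hfil : Finset.univ.filter (fun x : V => x ∉ ({v, w} : Finset V))
      = Finset.univ \ ({v, w} : Finset V) := by
    ext x; simp
  have hle : ({v, w} : Finset V).card ≤ Finset.univ.card :=
    Finset.card_le_card (Finset.subset_univ _)
  have h2 := card_pair_vw v w hvw
  rw [Fintype.card_subtype, hfil, Finset.card_sdiff_of_subset (Finset.subset_univ _), h2,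
    Finset.card_univ]
  rw [Finset.card_univ] at hle
  omega

lemma numLoops_eq (G : MarkedGraph V) (v w : V) (hvw : v ≠ w)
    (hv : G.adj v v = 1) (hw : G.adj w w = 0) :
    G.numLoops = (G.delete {v, w}).numLoops + 1 := by
  unfold MarkedGraph.numLoops
  rw [Finset.card_filter, Finset.card_filter]
  rw [← Finset.sum_sdiff (Finset.subset_univ ({v, w} : Finset V)),
    Finset.sum_pair hvw, hv, hw]
  have hs : ∑ x ∈ Finset.univ \ ({v, w} : Finset V),
        (if G.adj x x = 1 then 1 else 0 : ℕ)
      = ∑ i : {x : V // x ∉ ({v, w} : Finset V)}, (if G.adj i.1 i.1 = 1 then 1 else 0 : ℕ) :=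
    Finset.sum_subtype _ (by simp) _
  rw [hs]
  have h0 : ((0 : ZMod 2) = 1) = False := by simp
  simp only [h0, if_true, if_false, ite_true, ite_false]
  rfl

lemma mem_keep_unmarked (G : MarkedGraph V) {x : V} (hm : G.marked x = false) (T : Finset V) :
    x ∈ G.keep T := by
  simp [MarkedGraph.keep, hm]

lemma mem_keep_other (G : MarkedGraph V) (v w : V)
    (T' : Finset {x : V // x ∉ ({v, w} : Finset V)}) (bv bw : Bool)
    (x : V) (hx : x ∉ ({v, w} : Finset V)) :
    x ∈ G.keep (combine v w T' bv bw) ↔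
      (⟨x, hx⟩ : {x : V // x ∉ ({v, w} : Finset V)}) ∈ (G.delete {v, w}).keep T' := by
  simp only [MarkedGraph.keep, Finset.mem_filter, Finset.mem_univ, true_and,
    MarkedGraph.delta, Matrix.add_apply, Matrix.diagonal_apply_eq]
  simp only [MarkedGraph.keep, Finset.mem_filter, Finset.mem_univ, true_and,
    MarkedGraph.delete, MarkedGraph.delta, Matrix.add_apply, Matrix.diagonal_apply_eq,
    mem_combine_other T' bv bw x hx]

def keepEquiv (G : MarkedGraph V) (v w : V) (hvw : v ≠ w)
    (hmv : G.marked v = false) (hmw : G.marked w = false)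
    (T' : Finset {x : V // x ∉ ({v, w} : Finset V)}) (bv bw : Bool) :
    {x // x ∈ G.keep (combine v w T' bv bw)} ≃
      ({i // i ∈ (G.delete {v, w}).keep T'} ⊕ Bool) where
  toFun x :=
    if h : (x : V) ∉ ({v, w} : Finset V) then
      Sum.inl ⟨⟨x.1, h⟩, (mem_keep_other G v w T' bv bw x.1 h).mp x.2⟩
    else if x.1 = v then Sum.inr false else Sum.inr true
  invFun y :=
    match y with
    | Sum.inl i => ⟨i.1.1, (mem_keep_other G v w T' bv bw i.1.1 i.1.2).mpr i.2⟩
    | Sum.inr false => ⟨v, mem_keep_unmarked G hmv _⟩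
    | Sum.inr true => ⟨w, mem_keep_unmarked G hmw _⟩
  left_inv := by
    rintro ⟨x, hx⟩
    by_cases h : x ∉ ({v, w} : Finset V)
    · simp [h]
    · rw [not_not] at h
      rcases Finset.mem_insert.mp h with h' | h'
      · subst h'; simp [h]
      · rw [Finset.mem_singleton] at h'
        subst h'
        have hwx : ¬ (x = v) := fun hc => hvw (hc.symm)
        simp [h, hwx]
  right_inv := by
    rintro (⟨⟨x, hx⟩, hk⟩ | b)
    · simp [hx]
    · cases b
      · have h : ¬ (v ∉ ({v, w} : Finset V)) := by simp
        simp [h]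
      · have h : ¬ (w ∉ ({v, w} : Finset V)) := by simp
        have h2 : ¬ (w = v) := fun hc => hvw hc.symm
        simp [h, h2]

lemma subMat_apply (G : MarkedGraph V) (T : Finset V) (i j : {x // x ∈ G.keep T}) :
    G.subMat T i j = (G.adj + MarkedGraph.delta T) i.1 j.1 := rfl

lemma keepEquiv_apply_other (G : MarkedGraph V) (v w : V) (hvw : v ≠ w)
    (hmv : G.marked v = false) (hmw : G.marked w = false)
    (T' : Finset {x : V // x ∉ ({v, w} : Finset V)}) (bv bw : Bool)
    (x : {x // x ∈ G.keep (combine v w T' bv bw)}) (h : (x : V) ∉ ({v, w} : Finset V)) :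
    keepEquiv G v w hvw hmv hmw T' bv bw x =
      Sum.inl ⟨⟨x.1, h⟩, (mem_keep_other G v w T' bv bw x.1 h).mp x.2⟩ := by
  simp only [keepEquiv, Equiv.coe_fn_mk]
  rw [dif_pos h]

lemma keepEquiv_apply_v (G : MarkedGraph V) (v w : V) (hvw : v ≠ w)
    (hmv : G.marked v = false) (hmw : G.marked w = false)
    (T' : Finset {x : V // x ∉ ({v, w} : Finset V)}) (bv bw : Bool)
    (x : {x // x ∈ G.keep (combine v w T' bv bw)}) (h : (x : V) = v) :
    keepEquiv G v w hvw hmv hmw T' bv bw x = Sum.inr false := by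
  have h' : ¬ ((x : V) ∉ ({v, w} : Finset V)) := by simp [h]
  simp only [keepEquiv, Equiv.coe_fn_mk]
  rw [dif_neg h', if_pos h]

lemma keepEquiv_apply_w (G : MarkedGraph V) (v w : V) (hvw : v ≠ w)
    (hmv : G.marked v = false) (hmw : G.marked w = false)
    (T' : Finset {x : V // x ∉ ({v, w} : Finset V)}) (bv bw : Bool)
    (x : {x // x ∈ G.keep (combine v w T' bv bw)}) (h : (x : V) = w) :
    keepEquiv G v w hvw hmv hmw T' bv bw x = Sum.inr true := by
  have h' : ¬ ((x : V) ∉ ({v, w} : Finset V)) := by simp [h]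
  have h2 : ¬ ((x : V) = v) := by rw [h]; exact fun hc => hvw hc.symm
  simp only [keepEquiv, Equiv.coe_fn_mk]
  rw [dif_neg h', if_neg h2]

lemma subMat_eq (G : MarkedGraph V) (v w : V) (hsym : G.adj.IsSymm) (hvw : v ≠ w)
    (hmv : G.marked v = false) (hmw : G.marked w = false)
    (hv : G.adj v v = 1) (hw : G.adj w w = 0)
    (hsame : ∀ x, x ≠ v → x ≠ w → G.adj v x = G.adj w x)
    (T' : Finset {x : V // x ∉ ({v, w} : Finset V)}) (bv bw : Bool) :
    G.subMat (combine v w T' bv bw) =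
      (Mmat ((G.delete {v, w}).subMat T') (fun i => G.adj v i.1.1)
          (1 + (if bv then 1 else 0)) (if bw then 1 else 0) (G.adj v w)).submatrix
        (keepEquiv G v w hvw hmv hmw T' bv bw) (keepEquiv G v w hvw hmv hmw T' bv bw) := by
  ext x y
  rw [Matrix.submatrix_apply, subMat_apply]
  by_cases hxo : (x : V) ∉ ({v, w} : Finset V)
  · rw [keepEquiv_apply_other G v w hvw hmv hmw T' bv bw x hxo]
    have hxv : (x : V) ≠ v := by rintro hc; exact hxo (by simp [hc])
    have hxw : (x : V) ≠ w := by rintro hc; exact hxo (by simp [hc])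
    by_cases hyo : (y : V) ∉ ({v, w} : Finset V)
    · rw [keepEquiv_apply_other G v w hvw hmv hmw T' bv bw y hyo]
      simp only [Mmat, Matrix.of_apply, subMat_apply, MarkedGraph.delta, Matrix.add_apply]
      simp only [Mmat, Matrix.of_apply, subMat_apply, MarkedGraph.delete,
        MarkedGraph.delta, Matrix.add_apply, Matrix.diagonal_apply, Subtype.mk.injEq]
      rcases eq_or_ne (x : V) (y : V) with hxy | hxy
      · simp [hxy, mem_combine_other T' bv bw y.1 hyo]
      · simp [hxy]
    · rw [not_not] at hyo
      rcases Finset.mem_insert.mp hyo with hy' | hy'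
      · rw [keepEquiv_apply_v G v w hvw hmv hmw T' bv bw y hy']
        simp only [Mmat, Matrix.of_apply, MarkedGraph.delta, Matrix.add_apply,
          Matrix.diagonal_apply]
        rw [hy']
        simp [hxv, hsym.apply x.1 v]
      · rw [Finset.mem_singleton] at hy'
        rw [keepEquiv_apply_w G v w hvw hmv hmw T' bv bw y hy']
        simp only [Mmat, Matrix.of_apply, MarkedGraph.delta, Matrix.add_apply,
          Matrix.diagonal_apply]
        rw [hy', hsame x.1 hxv hxw, hsym.apply x.1 w]
        simp [hxw]
  · rw [not_not] at hxo
    rcases Finset.mem_insert.mp hxo with hx' | hx'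
    · -- x = v
      rw [keepEquiv_apply_v G v w hvw hmv hmw T' bv bw x hx']
      by_cases hyo : (y : V) ∉ ({v, w} : Finset V)
      · rw [keepEquiv_apply_other G v w hvw hmv hmw T' bv bw y hyo]
        have hyv : (y : V) ≠ v := by rintro hc; exact hyo (by simp [hc])
        simp only [Mmat, Matrix.of_apply, MarkedGraph.delta, Matrix.add_apply,
          Matrix.diagonal_apply]
        rw [hx']
        simp [Ne.symm hyv]
      · rw [not_not] at hyo
        rcases Finset.mem_insert.mp hyo with hy' | hy'
        · rw [keepEquiv_apply_v G v w hvw hmv hmw T' bv bw y hy']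
          simp only [Mmat, Matrix.of_apply, MarkedGraph.delta, Matrix.add_apply,
            Matrix.diagonal_apply]
          rw [hx', hy', hv]
          simp [mem_combine_v T' bv bw hvw]
        · rw [Finset.mem_singleton] at hy'
          rw [keepEquiv_apply_w G v w hvw hmv hmw T' bv bw y hy']
          simp only [Mmat, Matrix.of_apply, MarkedGraph.delta, Matrix.add_apply,
            Matrix.diagonal_apply]
          rw [hx', hy']
          simp [hvw]
    · -- x = w
      rw [Finset.mem_singleton] at hx'
      rw [keepEquiv_apply_w G v w hvw hmv hmw T' bv bw x hx']
      by_cases hyo : (y : V) ∉ ({v, w} : Finset V)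
      · rw [keepEquiv_apply_other G v w hvw hmv hmw T' bv bw y hyo]
        have hyv : (y : V) ≠ v := by rintro hc; exact hyo (by simp [hc])
        have hyw : (y : V) ≠ w := by rintro hc; exact hyo (by simp [hc])
        simp only [Mmat, Matrix.of_apply, MarkedGraph.delta, Matrix.add_apply,
          Matrix.diagonal_apply]
        rw [hx', hsame y.1 hyv hyw]
        simp [Ne.symm hyw]
      · rw [not_not] at hyo
        rcases Finset.mem_insert.mp hyo with hy' | hy'
        · rw [keepEquiv_apply_v G v w hvw hmv hmw T' bv bw y hy']
          simp only [Mmat, Matrix.of_apply, MarkedGraph.delta, Matrix.add_apply,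
            Matrix.diagonal_apply]
          rw [hx', hy', hsym.apply v w]
          simp [Ne.symm hvw]
        · rw [Finset.mem_singleton] at hy'
          rw [keepEquiv_apply_w G v w hvw hmv hmw T' bv bw y hy']
          simp only [Mmat, Matrix.of_apply, MarkedGraph.delta, Matrix.add_apply,
            Matrix.diagonal_apply]
          rw [hx', hy', hw]
          simp [mem_combine_w T' bv bw hvw]

open LaurentPolynomial in
lemma bracket_eval_eq (G : MarkedGraph V) (v w : V) (hsym : G.adj.IsSymm) (hvw : v ≠ w)
    (hmv : G.marked v = false) (hmw : G.marked w = false)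
    (hv : G.adj v v = 1) (hw : G.adj w w = 0)
    (hsame : ∀ x, x ≠ v → x ≠ w → G.adj v x = G.adj w x) :
    MvPolynomial.aeval
        ![(T (-1) : LaurentPolynomial ℤ), T 1, -T 2 - T (-2)] G.bracket
      = MvPolynomial.aeval
        ![(T (-1) : LaurentPolynomial ℤ), T 1, -T 2 - T (-2)] (G.delete {v, w}).bracket := by
  classical
  set α : LaurentPolynomial ℤ := T (-1) with hα
  set β : LaurentPolynomial ℤ := T 1 with hβ
  set δ : LaurentPolynomial ℤ := -T 2 - T (-2) with hδdef
  have hαβ : α * β = 1 := by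
    rw [hα, hβ, ← T_add]; norm_num
  have hδ : α ^ 2 + β ^ 2 + α * β * δ = 0 := by
    have h1 : α ^ 2 = T (-2) := by rw [hα, sq, ← T_add]; norm_num
    have h2 : β ^ 2 = T 2 := by rw [hβ, sq, ← T_add]; norm_num
    rw [h1, h2, hαβ, hδdef]; ring
  have hterm : ∀ (i j k : ℕ),
      MvPolynomial.aeval (R := ℤ) ![α, β, δ]
        ((MvPolynomial.X 0 : MvPolynomial (Fin 3) ℤ) ^ i * MvPolynomial.X 1 ^ j
          * MvPolynomial.X 2 ^ k)
        = α ^ i * β ^ j * δ ^ k := by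
    intro i j k
    simp [map_mul, map_pow]
  rw [MarkedGraph.bracket, MarkedGraph.bracket, map_mul, map_mul, map_pow, map_pow]
  have hfree : (G.delete {v, w}).freeLoops = G.freeLoops := rfl
  rw [hfree]
  congr 1
  rw [map_sum, map_sum]
  have hL : ∀ T : Finset V,
      MvPolynomial.aeval (R := ℤ) ![α, β, δ]
        ((MvPolynomial.X 0 : MvPolynomial (Fin 3) ℤ) ^ (Fintype.card V - T.card)
          * MvPolynomial.X 1 ^ T.card * MvPolynomial.X 2 ^ MarkedGraph.nullity (G.subMat T))
      = α ^ (Fintype.card V - T.card) * β ^ T.card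
          * δ ^ MarkedGraph.nullity (G.subMat T) := fun T => hterm _ _ _
  rw [Finset.sum_congr rfl fun T _ => hL T,
    Finset.sum_congr rfl fun T' _ => hterm _ _ _]
  -- card facts
  have hn := card_out v w hvw
  -- split the sum
  rw [← Fintype.sum_equiv (splitEquiv v w hvw)
    (fun p => α ^ (Fintype.card V - (splitEquiv v w hvw p).card)
      * β ^ (splitEquiv v w hvw p).card
      * δ ^ MarkedGraph.nullity (G.subMat (splitEquiv v w hvw p)))
    (fun T => α ^ (Fintype.card V - T.card) * β ^ T.card
      * δ ^ MarkedGraph.nullity (G.subMat T)) (fun p => rfl)]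
  simp only [Fintype.sum_prod_type, Fintype.sum_bool, splitEquiv_apply]
  refine Finset.sum_congr rfl fun T' _ => ?_
  have ht : T'.card ≤ Fintype.card {x : V // x ∉ ({v, w} : Finset V)} := by
    simpa using Finset.card_le_univ T'
  have hc11 : (combine v w T' true true).card = T'.card + 2 := by
    rw [card_combine T' _ _ hvw]; simp
  have hc10 : (combine v w T' true false).card = T'.card + 1 := by
    rw [card_combine T' _ _ hvw]; simp
  have hc01 : (combine v w T' false true).card = T'.card + 1 := by
    rw [card_combine T' _ _ hvw]; simp
  have hc00 : (combine v w T' false false).card = T'.card := by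
    rw [card_combine T' _ _ hvw]; simp
  have e2 : Fintype.card V - (T'.card + 2)
      = Fintype.card {x : V // x ∉ ({v, w} : Finset V)} - T'.card := by omega
  have e1 : Fintype.card V - (T'.card + 1)
      = (Fintype.card {x : V // x ∉ ({v, w} : Finset V)} - T'.card) + 1 := by omega
  have e0 : Fintype.card V - T'.card
      = (Fintype.card {x : V // x ∉ ({v, w} : Finset V)} - T'.card) + 2 := by omega
  have hff : MarkedGraph.nullity (G.subMat (combine v w T' false false))
      = MarkedGraph.nullity (Pmat ((G.delete {v, w}).subMat T')
          (fun i => G.adj v i.1.1) (G.adj v w)) := by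
    rw [subMat_eq G v w hsym hvw hmv hmw hv hw hsame T' false false, nullity_submatrix]
    simp only [Bool.false_eq_true, if_false, ite_false, add_zero]
    exact nullity_M10 _ _ _
  have htt : MarkedGraph.nullity (G.subMat (combine v w T' true true))
      = MarkedGraph.nullity (Pmat ((G.delete {v, w}).subMat T')
          (fun i => G.adj v i.1.1) (G.adj v w)) := by
    rw [subMat_eq G v w hsym hvw hmv hmw hv hw hsame T' true true, nullity_submatrix]
    simp only [if_true, ite_true]
    rw [show ((1 : ZMod 2) + 1) = 0 from by decide]
    exact nullity_M01 _ _ _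
  have h10 : MarkedGraph.nullity (G.subMat (combine v w T' true false))
      = MarkedGraph.nullity (Mmat ((G.delete {v, w}).subMat T')
          (fun i => G.adj v i.1.1) 0 0 (G.adj v w)) := by
    rw [subMat_eq G v w hsym hvw hmv hmw hv hw hsame T' true false, nullity_submatrix]
    simp only [if_true, ite_true, Bool.false_eq_true, if_false, ite_false]
    rw [show ((1 : ZMod 2) + 1) = 0 from by decide]
  have h01 : MarkedGraph.nullity (G.subMat (combine v w T' false true))
      = MarkedGraph.nullity (Mmat ((G.delete {v, w}).subMat T')
          (fun i => G.adj v i.1.1) 1 1 (G.adj v w)) := by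
    rw [subMat_eq G v w hsym hvw hmv hmw hv hw hsame T' false true, nullity_submatrix]
    simp only [if_true, ite_true, Bool.false_eq_true, if_false, ite_false, add_zero]
  have hmix : δ ^ MarkedGraph.nullity (G.subMat (combine v w T' true false))
      + δ ^ MarkedGraph.nullity (G.subMat (combine v w T' false true))
      = δ ^ MarkedGraph.nullity ((G.delete {v, w}).subMat T')
      + δ ^ (MarkedGraph.nullity (Pmat ((G.delete {v, w}).subMat T')
          (fun i => G.adj v i.1.1) (G.adj v w)) + 1) := by
    rw [h10, h01]
    rcases F2_cases (G.adj v w) with he | he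
    · rw [he]
      have ha := nullity_Maa' ((G.delete {v, w}).subMat T') (fun i => G.adj v i.1.1) 0
      rw [show ((0 : ZMod 2) + 1) = 1 from by decide] at ha
      rw [ha, nullity_Maa ((G.delete {v, w}).subMat T') (fun i => G.adj v i.1.1) 0]
      ring
    · rw [he]
      have ha := nullity_Maa' ((G.delete {v, w}).subMat T') (fun i => G.adj v i.1.1) 1
      rw [show ((1 : ZMod 2) + 1) = 0 from by decide] at ha
      rw [ha, nullity_Maa ((G.delete {v, w}).subMat T') (fun i => G.adj v i.1.1) 1]
  rw [hc11, hc10, hc01, hc00, e2, e1, e0]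
  erw [hff, htt, h10, h01]
  rw [h10, h01] at hmix
  linear_combination
    (α ^ (Fintype.card {x : V // x ∉ ({v, w} : Finset V)} - T'.card) * β ^ T'.card
        * δ ^ MarkedGraph.nullity (Pmat ((G.delete {v, w}).subMat T')
            (fun i => G.adj v i.1.1) (G.adj v w))) * hδ
    + (α ^ (Fintype.card {x : V // x ∉ ({v, w} : Finset V)} - T'.card) * β ^ T'.card
        * δ ^ MarkedGraph.nullity ((G.delete {v, w}).subMat T')) * hαβ
    + (α ^ (Fintype.card {x : V // x ∉ ({v, w} : Finset V)} - T'.card) * β ^ T'.card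
        * (α * β)) * hmix

end Omega2

/-- The Jones polynomial is invariant under the Ω.2 move: if `v` and
`w` are unmarked vertices, `v` looped, `w` unlooped, adjacent to exactly the same
vertices outside `{v,w}`, then `V_G = V_{G - v - w}`. -/
theorem jones_omega2 {V : Type} [Fintype V] [DecidableEq V]
    (G : MarkedGraph V) (hsym : G.adj.IsSymm) (v w : V) (hvw : v ≠ w)
    (hmv : G.marked v = false) (hmw : G.marked w = false)
    (hv : G.adj v v = 1) (hw : G.adj w w = 0)
    (hsame : ∀ x, x ≠ v → x ≠ w → G.adj v x = G.adj w x) :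
    G.jones = (G.delete {v, w}).jones := by
  have hn := Omega2.card_out v w hvw
  have hl := Omega2.numLoops_eq G v w hvw hv hw
  rw [MarkedGraph.jones, MarkedGraph.jones]
  rw [Omega2.bracket_eval_eq G v w hsym hvw hmv hmw hv hw hsame]
  have h1 : ((-1 : LaurentPolynomial ℤ)) ^ Fintype.card V
      = (-1) ^ Fintype.card {x : V // x ∉ ({v, w} : Finset V)} := by
    rw [hn, pow_add, neg_one_sq, mul_one]
  have h2 : (3 * (Fintype.card V : ℤ) - 6 * (G.numLoops : ℤ))
      = 3 * (Fintype.card {x : V // x ∉ ({v, w} : Finset V)} : ℤ)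
        - 6 * (((G.delete {v, w}).numLoops : ℤ)) := by
    rw [hn, hl]; push_cast; ring
  rw [h1, h2]
end
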